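/- Suppose g : ℝ → ℝ is a function such that the bivariate function Dg(x,y) = g(x+y) − g(x) − g(y) is locally Lipschitz on ℝ², i.e., for every compact set Ω ⊂ ℝ² there is a constant K ≥ 0 such that |Dg(p) − Dg(q)| ≤ K·|p − q| for all p, q ∈ Ω. Then there exist a locally Lipschitz function f : ℝ → ℝ (for every compact Ω ⊂ ℝ there is K ≥ 0 with |f(x) − f(y)| ≤ K·|x − y| for all x, y ∈ Ω) and an additive function A : ℝ → ℝ (A(x+y) = A(x) + A(y) for all x, y ∈ ℝ) such that g = f + A. -/

import Mathlib

open MeasureTheory intervalIntegral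

/-- Key cohomological identity: if `D` is a continuous symmetric cocycle, then
`f x := (∫ t in 0..x, D (t,1)) - ∫ u in 0..1, D (x,u)` satisfies `Df = D`. -/
lemma stmt_11_aux (D : ℝ × ℝ → ℝ) (contD : Continuous D)
    (coc : ∀ x y z : ℝ, D (x, y) + D (x + y, z) = D (x, y + z) + D (y, z))
    (x y : ℝ) :
    ((∫ t in (0:ℝ)..(x + y), D (t, 1)) - ∫ u in (0:ℝ)..1, D (x + y, u))
      - (((∫ t in (0:ℝ)..x, D (t, 1)) - ∫ u in (0:ℝ)..1, D (x, u))
      + ((∫ t in (0:ℝ)..y, D (t, 1)) - ∫ u in (0:ℝ)..1, D (y, u)))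
      = D (x, y) := by
  have contDx : ∀ a : ℝ, Continuous (fun u => D (a, u)) := fun a =>
    contD.comp (continuous_const.prodMk continuous_id)
  have contD1 : Continuous (fun t => D (t, 1)) :=
    contD.comp (continuous_id.prodMk continuous_const)
  have hint : ∀ (a b c : ℝ), IntervalIntegrable (fun u => D (a, u)) volume b c :=
    fun a b c => (contDx a).intervalIntegrable b c
  have hint1 : ∀ (b c : ℝ), IntervalIntegrable (fun t => D (t, 1)) volume b c :=
    fun b c => contD1.intervalIntegrable b c
  -- adjacent interval identities for D(x, ·)
  have E1 : (∫ u in (0:ℝ)..y, D (x, u)) + ∫ u in y..(y + 1), D (x, u)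
      = ∫ u in (0:ℝ)..(y + 1), D (x, u) :=
    integral_add_adjacent_intervals (hint x 0 y) (hint x y (y + 1))
  have E2 : (∫ u in (0:ℝ)..1, D (x, u)) + ∫ u in (1:ℝ)..(y + 1), D (x, u)
      = ∫ u in (0:ℝ)..(y + 1), D (x, u) :=
    integral_add_adjacent_intervals (hint x 0 1) (hint x 1 (y + 1))
  -- f1 difference
  have F1 : (∫ t in (0:ℝ)..x, D (t, 1)) + ∫ t in x..(x + y), D (t, 1)
      = ∫ t in (0:ℝ)..(x + y), D (t, 1) :=
    integral_add_adjacent_intervals (hint1 0 x) (hint1 x (x + y))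
  have F2 : (∫ t in x..(x + y), D (t, 1)) = ∫ t in (0:ℝ)..y, D (x + t, 1) := by
    have := intervalIntegral.integral_comp_add_left (a := 0) (b := y)
      (fun t => D (t, 1)) x
    simpa using this.symm
  have F3 : (∫ t in (0:ℝ)..y, D (x + t, 1))
      = ∫ t in (0:ℝ)..y, (D (x, t + 1) - D (x, t) + D (t, 1)) := by
    apply intervalIntegral.integral_congr
    intro t _
    have h := coc x t 1
    simp only
    linarith
  have contShift : Continuous (fun t : ℝ => D (x, t + 1)) :=
    contD.comp (continuous_const.prodMk (continuous_id.add continuous_const))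
  have intShift : IntervalIntegrable (fun t : ℝ => D (x, t + 1)) volume 0 y :=
    contShift.intervalIntegrable 0 y
  have intsub : IntervalIntegrable (fun t : ℝ => D (x, t + 1) - D (x, t)) volume 0 y :=
    (contShift.sub (contDx x)).intervalIntegrable 0 y
  have F4 : (∫ t in (0:ℝ)..y, (D (x, t + 1) - D (x, t) + D (t, 1)))
      = ((∫ t in (0:ℝ)..y, D (x, t + 1)) - ∫ t in (0:ℝ)..y, D (x, t))
        + ∫ t in (0:ℝ)..y, D (t, 1) := by
    rw [intervalIntegral.integral_add intsub (hint1 0 y),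
      intervalIntegral.integral_sub intShift (hint x 0 y)]
  have F5 : (∫ t in (0:ℝ)..y, D (x, t + 1)) = ∫ u in (1:ℝ)..(y + 1), D (x, u) := by
    have := intervalIntegral.integral_comp_add_right (a := 0) (b := y)
      (fun u => D (x, u)) 1
    simpa using this
  -- e identity
  have G2 : (∫ z in (0:ℝ)..1, D (x, y + z)) = ∫ u in y..(y + 1), D (x, u) := by
    have := intervalIntegral.integral_comp_add_left (a := 0) (b := 1)
      (fun u => D (x, u)) y
    simpa using this
  have G1 : (∫ u in (0:ℝ)..1, D (x + y, u))
      = (∫ z in (0:ℝ)..1, D (x, y + z)) + (∫ u in (0:ℝ)..1, D (y, u)) - D (x, y) := by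
    have hcongr : (∫ u in (0:ℝ)..1, D (x + y, u))
        = ∫ z in (0:ℝ)..1, (D (x, y + z) + D (y, z) - D (x, y)) := by
      apply intervalIntegral.integral_congr
      intro z _
      have h := coc x y z
      simp only
      linarith
    have contYS : Continuous (fun z : ℝ => D (x, y + z)) :=
      contD.comp (continuous_const.prodMk (continuous_const.add continuous_id))
    have i3 : IntervalIntegrable (fun z : ℝ => D (x, y + z)) volume 0 1 :=
      contYS.intervalIntegrable 0 1
    have i2 : IntervalIntegrable (fun z : ℝ => D (x, y + z) + D (y, z)) volume 0 1 :=
      (contYS.add (contDx y)).intervalIntegrable 0 1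
    rw [hcongr, intervalIntegral.integral_sub i2 intervalIntegrable_const,
      intervalIntegral.integral_add i3 (hint y 0 1)]
    simp
  -- combine everything
  rw [G1, G2]
  linarith [F1, F2, F3, F4, F5, E1, E2]

theorem stmt_11 (g : ℝ → ℝ)
    (hg : ∀ Ω : Set (ℝ × ℝ), IsCompact Ω → ∃ K : ℝ, 0 ≤ K ∧ ∀ p ∈ Ω, ∀ q ∈ Ω,
      |(g (p.1 + p.2) - g p.1 - g p.2) - (g (q.1 + q.2) - g q.1 - g q.2)|
        ≤ K * Real.sqrt ((p.1 - q.1) ^ 2 + (p.2 - q.2) ^ 2)) :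
    ∃ f A : ℝ → ℝ,
      (∀ Ω : Set ℝ, IsCompact Ω → ∃ K : ℝ, 0 ≤ K ∧ ∀ x ∈ Ω, ∀ y ∈ Ω,
        |f x - f y| ≤ K * |x - y|) ∧
      (∀ x y : ℝ, A (x + y) = A x + A y) ∧
      g = f + A := by
  classical
  set D : ℝ × ℝ → ℝ := fun p => g (p.1 + p.2) - g p.1 - g p.2 with hD
  have sqrt_le : ∀ s t : ℝ, Real.sqrt (s ^ 2 + t ^ 2) ≤ |s| + |t| := by
    intro s t
    rw [show |s| + |t| = Real.sqrt ((|s| + |t|) ^ 2) from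
      (Real.sqrt_sq (by positivity)).symm]
    apply Real.sqrt_le_sqrt
    nlinarith [abs_nonneg s, abs_nonneg t, sq_abs s, sq_abs t, abs_mul_abs_self s, abs_mul_abs_self t]
  -- continuity of D
  have contD : Continuous D := by
    rw [continuous_iff_continuousAt]
    intro p
    obtain ⟨K, hK0, hK⟩ := hg (Metric.closedBall p 1) (isCompact_closedBall p 1)
    have hlip : LipschitzOnWith ⟨2 * K, by positivity⟩ D (Metric.closedBall p 1) := by
      apply LipschitzOnWith.of_dist_le_mul
      intro a ha b hb
      have h1 := hK a ha b hb
      have h2 : Real.sqrt ((a.1 - b.1) ^ 2 + (a.2 - b.2) ^ 2)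
          ≤ |a.1 - b.1| + |a.2 - b.2| := sqrt_le _ _
      have hd1 : |a.1 - b.1| ≤ dist a b := by
        rw [Prod.dist_eq, Real.dist_eq, Real.dist_eq]
        exact le_max_left _ _
      have hd2 : |a.2 - b.2| ≤ dist a b := by
        rw [Prod.dist_eq, Real.dist_eq, Real.dist_eq]
        exact le_max_right _ _
      have hDab : dist (D a) (D b) = |D a - D b| := Real.dist_eq _ _
      rw [hDab]
      simp only [hD]
      push_cast
      show _ ≤ 2 * K * dist a b
      nlinarith [Real.sqrt_nonneg ((a.1 - b.1) ^ 2 + (a.2 - b.2) ^ 2), dist_nonneg (x := a) (y := b)]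
    exact (hlip.continuousOn).continuousAt (Metric.closedBall_mem_nhds p one_pos)
  have contDx : ∀ a : ℝ, Continuous (fun u => D (a, u)) := fun a =>
    contD.comp (continuous_const.prodMk continuous_id)
  have contD1 : Continuous (fun t => D (t, 1)) :=
    contD.comp (continuous_id.prodMk continuous_const)
  have coc : ∀ x y z : ℝ, D (x, y) + D (x + y, z) = D (x, y + z) + D (y, z) := by
    intro x y z
    simp only [hD, add_assoc]
    ring
  set f : ℝ → ℝ := fun x => (∫ t in (0:ℝ)..x, D (t, 1)) - ∫ u in (0:ℝ)..1, D (x, u)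
    with hf
  set A : ℝ → ℝ := fun x => g x - f x with hA
  have key : ∀ x y : ℝ, f (x + y) - (f x + f y) = D (x, y) := by
    intro x y
    simp only [hf]
    exact stmt_11_aux D contD coc x y
  refine ⟨f, A, ?_, ?_, ?_⟩
  · -- f locally Lipschitz
    intro Ω hΩ
    obtain ⟨r, hr⟩ := hΩ.isBounded.subset_closedBall 0
    have hΩsub : Ω ⊆ Set.Icc (-r) r := by
      intro x hx
      have := hr hx
      rw [Real.closedBall_eq_Icc] at this
      simpa using this
    -- bound for the first piece
    obtain ⟨C, hC⟩ := (isCompact_Icc (a := -r) (b := r)).exists_bound_of_continuousOn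
      contD1.continuousOn
    -- bound for the second piece
    obtain ⟨K, hK0, hK⟩ := hg ((Set.Icc (-r) r) ×ˢ (Set.Icc (0:ℝ) 1))
      ((isCompact_Icc).prod isCompact_Icc)
    refine ⟨max C 0 + K, by positivity, ?_⟩
    intro x hx y hy
    have hxI := hΩsub hx
    have hyI := hΩsub hy
    have hf1 : |(∫ t in (0:ℝ)..x, D (t, 1)) - ∫ t in (0:ℝ)..y, D (t, 1)|
        ≤ max C 0 * |x - y| := by
      have hadj : (∫ t in (0:ℝ)..y, D (t, 1)) + ∫ t in y..x, D (t, 1)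
          = ∫ t in (0:ℝ)..x, D (t, 1) :=
        integral_add_adjacent_intervals (contD1.intervalIntegrable 0 y)
          (contD1.intervalIntegrable y x)
      have hbound : ∀ t ∈ Set.uIoc y x, ‖D (t, 1)‖ ≤ max C 0 := by
        intro t ht
        have htI : t ∈ Set.Icc (-r) r := by
          have h1 : Set.uIoc y x ⊆ Set.uIcc y x := Set.Ioc_subset_Icc_self
          have h2 : Set.uIcc y x ⊆ Set.Icc (-r) r := Set.uIcc_subset_Icc hyI hxI
          exact h2 (h1 ht)
        exact le_trans (hC t htI) (le_max_left _ _)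
      have := intervalIntegral.norm_integral_le_of_norm_le_const hbound
      rw [show (∫ t in (0:ℝ)..x, D (t, 1)) - ∫ t in (0:ℝ)..y, D (t, 1)
          = ∫ t in y..x, D (t, 1) by linarith]
      simpa [Real.norm_eq_abs] using this
    have hf2 : |(∫ u in (0:ℝ)..1, D (x, u)) - ∫ u in (0:ℝ)..1, D (y, u)|
        ≤ K * |x - y| := by
      have hsub : (∫ u in (0:ℝ)..1, D (x, u)) - ∫ u in (0:ℝ)..1, D (y, u)
          = ∫ u in (0:ℝ)..1, (D (x, u) - D (y, u)) :=
        (intervalIntegral.integral_sub ((contDx x).intervalIntegrable 0 1)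
          ((contDx y).intervalIntegrable 0 1)).symm
      have hbound : ∀ u ∈ Set.uIoc (0:ℝ) 1, ‖D (x, u) - D (y, u)‖ ≤ K * |x - y| := by
        intro u hu
        have huI : u ∈ Set.Icc (0:ℝ) 1 := by
          rw [Set.uIoc_of_le (by norm_num : (0:ℝ) ≤ 1)] at hu
          exact Set.Ioc_subset_Icc_self hu
        have := hK (x, u) (Set.mk_mem_prod hxI huI) (y, u) (Set.mk_mem_prod hyI huI)
        simp only [hD] at this ⊢
        have hs : Real.sqrt ((x - y) ^ 2 + (u - u) ^ 2) = |x - y| := by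
          rw [sub_self]
          norm_num [Real.sqrt_sq_eq_abs]
        rw [Real.norm_eq_abs]
        calc |g (x + u) - g x - g u - (g (y + u) - g y - g u)|
            ≤ K * Real.sqrt ((x - y) ^ 2 + (u - u) ^ 2) := this
          _ = K * |x - y| := by rw [hs]
      have := intervalIntegral.norm_integral_le_of_norm_le_const hbound
      rw [hsub]
      simpa using this
    have : |f x - f y| ≤ max C 0 * |x - y| + K * |x - y| := by
      simp only [hf]
      calc |((∫ t in (0:ℝ)..x, D (t, 1)) - ∫ u in (0:ℝ)..1, D (x, u))
            - ((∫ t in (0:ℝ)..y, D (t, 1)) - ∫ u in (0:ℝ)..1, D (y, u))|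
          = |((∫ t in (0:ℝ)..x, D (t, 1)) - ∫ t in (0:ℝ)..y, D (t, 1))
            - ((∫ u in (0:ℝ)..1, D (x, u)) - ∫ u in (0:ℝ)..1, D (y, u))| := by
            congr 1
            ring
        _ ≤ |(∫ t in (0:ℝ)..x, D (t, 1)) - ∫ t in (0:ℝ)..y, D (t, 1)|
            + |(∫ u in (0:ℝ)..1, D (x, u)) - ∫ u in (0:ℝ)..1, D (y, u)| :=
            abs_sub _ _
        _ ≤ max C 0 * |x - y| + K * |x - y| := add_le_add hf1 hf2
    have hring : max C 0 * |x - y| + K * |x - y| = (max C 0 + K) * |x - y| := by ring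
    linarith [this]
  · -- A additive
    intro x y
    have h1 := key x y
    simp only [hA, hD] at h1 ⊢
    linarith
  · funext x
    simp only [hA, Pi.add_apply]
    ring
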